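/- Let $A$ be the $(n+1)\times(n+1)$ matrix with entries $A_{i,j} = Z_{(a_i,0)\to(0,j)}$ where $0 = a_0 < a_1 < \cdots < a_n$ are integers and $Z$ is the weighted Schröder path partition function. Then $\det(A) = q^{n(n+1)(2n+1)/6} \prod_{s=0}^{n-1}(\gamma + q^{2s+1})^{n-s} \cdot \frac{\Delta(q^{2a_0}, q^{2a_1}, \ldots, q^{2a_n})}{\Delta(q^0, q^2, \ldots, q^{2n})}$, where $\Delta(x_0,\ldots,x_n) = \prod_{i>j}(x_i - x_j)$ is the Vandermonde determinant. -/

import Mathlib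

/-- A step of a Schröder path: up `(0,1)`, left `(-1,0)`, or diagonal `(-1,1)`. -/
inductive SStep
  | up
  | left
  | diag
deriving DecidableEq

instance : Fintype SStep :=
  ⟨{SStep.up, SStep.left, SStep.diag}, by intro s; cases s <;> decide⟩

/-- The result of taking a step from a given position. -/
def stepMove : ℤ × ℤ → SStep → ℤ × ℤ
  | (x, y), SStep.up => (x, y + 1)
  | (x, y), SStep.left => (x - 1, y)
  | (x, y), SStep.diag => (x - 1, y + 1)

/-- Endpoint of a walk starting at `p` and taking the steps in the list. -/
def endPos : ℤ × ℤ → List SStep → ℤ × ℤ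
  | p, [] => p
  | p, s :: rest => endPos (stepMove p s) rest

/-- The area to the left of the path, `∑ (x_s + x_{s+1}) (y_{s+1} - y_s)`:
an up step from `(x,y)` contributes `2x`, a diagonal step `2x - 1`, a left step `0`. -/
def areaOf : ℤ × ℤ → List SStep → ℤ
  | _, [] => 0
  | (x, y), SStep.up :: rest => 2 * x + areaOf (x, y + 1) rest
  | (x, y), SStep.left :: rest => areaOf (x - 1, y) rest
  | (x, y), SStep.diag :: rest => (2 * x - 1) + areaOf (x - 1, y + 1) rest

/-- All lists of steps of length `n`. -/
def allLists : ℕ → Finset (List SStep)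
  | 0 => {[]}
  | n + 1 => Finset.univ.biUnion fun s : SStep => (allLists n).image fun l => s :: l

/-- The (finite) set of Schröder paths from `(i,0)` to `(0,j)`, encoded as their
lists of steps read from the starting point `(i,0)`. -/
def pathFinset (i j : ℕ) : Finset (List SStep) :=
  ((Finset.range (i + j + 1)).biUnion allLists).filter
    fun p => endPos ((i : ℤ), 0) p = (0, (j : ℤ))

/-- Number of diagonal steps of a path. -/
def diagCount (p : List SStep) : ℕ := p.count SStep.diag

/-- The partition function `Z_{(i,0)→(0,j)} = ∑_p γ^{k(p)} q^{A(p)}` of weighted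
Schröder paths from `(i,0)` to `(0,j)`. -/
def Zpf {R : Type*} [CommRing R] (γ q : R) (i j : ℕ) : R :=
  ∑ p ∈ pathFinset i j, γ ^ diagCount p * q ^ (areaOf ((i : ℤ), 0) p).toNat

open Finset

lemma endPos_fst_le (p : List SStep) : ∀ x y : ℤ, (endPos (x, y) p).1 ≤ x := by
  induction p with
  | nil => intro x y; exact le_refl x
  | cons s rest ih =>
    intro x y
    cases s <;> simp only [endPos, stepMove] <;>
      [exact ih x (y+1); exact (ih (x-1) y).trans (by omega); exact (ih (x-1) (y+1)).trans (by omega)]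

lemma endPos_snd_ge (p : List SStep) : ∀ x y : ℤ, y ≤ (endPos (x, y) p).2 := by
  induction p with
  | nil => intro x y; exact le_refl y
  | cons s rest ih =>
    intro x y
    cases s <;> simp only [endPos, stepMove] <;>
      [exact le_trans (by omega) (ih x (y+1)); exact ih (x-1) y;
       exact le_trans (by omega) (ih (x-1) (y+1))]

lemma length_le_endPos (p : List SStep) : ∀ x y : ℤ,
    (p.length : ℤ) ≤ (x - (endPos (x, y) p).1) + ((endPos (x, y) p).2 - y) := by
  induction p with
  | nil => intro x y; simp [endPos]
  | cons s rest ih =>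
    intro x y
    cases s <;> simp only [endPos, stepMove, List.length_cons] <;> push_cast <;>
      [have := ih x (y+1); have := ih (x-1) y; have := ih (x-1) (y+1)] <;> omega

lemma mem_allLists {p : List SStep} {n : ℕ} : p ∈ allLists n ↔ p.length = n := by
  induction n generalizing p with
  | zero => simp [allLists, List.length_eq_zero_iff]
  | succ n ih =>
    simp only [allLists, mem_biUnion, mem_univ, true_and, mem_image]
    constructor
    · rintro ⟨s, l, hl, rfl⟩; simp [ih.mp hl]
    · intro h
      cases p with
      | nil => simp at h
      | cons s l =>
        refine ⟨s, l, ih.mpr ?_, rfl⟩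
        simpa using h

lemma mem_pathFinset {p : List SStep} {i j : ℕ} :
    p ∈ pathFinset i j ↔ endPos ((i : ℤ), 0) p = (0, (j : ℤ)) := by
  unfold pathFinset
  rw [mem_filter]
  constructor
  · exact fun h => h.2
  · intro h
    refine ⟨?_, h⟩
    rw [mem_biUnion]
    refine ⟨p.length, ?_, mem_allLists.mpr rfl⟩
    rw [mem_range]
    have := length_le_endPos p (i : ℤ) 0
    rw [h] at this
    simp at this
    omega

lemma areaOf_y_irrel (p : List SStep) : ∀ x y y' : ℤ, areaOf (x, y) p = areaOf (x, y') p := by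
  induction p with
  | nil => intros; rfl
  | cons s rest ih =>
    intro x y y'
    cases s <;> simp only [areaOf] <;> rw [ih]

lemma endPos_shift (p : List SStep) : ∀ x y c : ℤ,
    endPos (x, y + c) p = ((endPos (x, y) p).1, (endPos (x, y) p).2 + c) := by
  induction p with
  | nil => intros; rfl
  | cons s rest ih =>
    intro x y c
    cases s <;> simp only [endPos, stepMove]
    · rw [show y + c + 1 = (y + 1) + c by ring, ih]
    · rw [ih]
    · rw [show y + c + 1 = (y + 1) + c by ring, ih]

lemma areaOf_nonneg (p : List SStep) : ∀ x y : ℤ, 0 ≤ (endPos (x, y) p).1 → 0 ≤ areaOf (x, y) p := by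
  induction p with
  | nil => intros; simp [areaOf]
  | cons s rest ih =>
    intro x y h
    cases s <;> simp only [endPos, stepMove, areaOf] at h ⊢
    · have h1 := endPos_fst_le rest x (y+1)
      have := ih x (y+1) h
      omega
    · exact ih (x-1) y h
    · have h1 := endPos_fst_le rest (x-1) (y+1)
      have := ih (x-1) (y+1) h
      omega

lemma endPos_replicate_left (i : ℕ) : ∀ x y : ℤ,
    endPos (x, y) (List.replicate i SStep.left) = (x - i, y) := by
  induction i with
  | zero => intro x y; simp [endPos]
  | succ i ih =>
    intro x y
    rw [List.replicate_succ]
    simp only [endPos, stepMove]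
    rw [ih]
    exact Prod.ext_iff.mpr ⟨by push_cast; ring, rfl⟩

lemma endPos_replicate_up (j : ℕ) : ∀ x y : ℤ,
    endPos (x, y) (List.replicate j SStep.up) = (x, y + j) := by
  induction j with
  | zero => intro x y; simp [endPos]
  | succ j ih =>
    intro x y
    rw [List.replicate_succ]
    simp only [endPos, stepMove]
    rw [ih]
    exact Prod.ext_iff.mpr ⟨rfl, by push_cast; ring⟩

lemma eq_replicate_left : ∀ (p : List SStep) (i : ℕ) (y : ℤ),
    endPos ((i : ℤ), y) p = (0, y) → p = List.replicate i SStep.left := by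
  intro p
  induction p with
  | nil =>
    intro i y h
    simp only [endPos, Prod.mk.injEq] at h
    have : i = 0 := by omega
    simp [this]
  | cons s rest ih =>
    intro i y h
    cases s <;> simp only [endPos, stepMove] at h
    · have := endPos_snd_ge rest (i : ℤ) (y + 1)
      rw [h] at this; omega
    · cases i with
      | zero =>
        exfalso
        have hle := endPos_fst_le rest (((0 : ℕ) : ℤ) - 1) y
        rw [h] at hle
        simp at hle
      | succ i' =>
        have hx : ((i' + 1 : ℕ) : ℤ) - 1 = (i' : ℤ) := by push_cast; ring
        rw [hx] at h
        rw [List.replicate_succ, ih i' y h]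
    · have := endPos_snd_ge rest ((i : ℤ) - 1) (y + 1)
      rw [h] at this; omega

lemma eq_replicate_up : ∀ (p : List SStep) (j : ℕ) (y : ℤ),
    endPos (0, y) p = (0, y + j) → p = List.replicate j SStep.up := by
  intro p
  induction p with
  | nil =>
    intro j y h
    simp only [endPos, Prod.mk.injEq] at h
    have : j = 0 := by omega
    simp [this]
  | cons s rest ih =>
    intro j y h
    cases s <;> simp only [endPos, stepMove] at h
    · cases j with
      | zero =>
        have := endPos_snd_ge rest 0 (y + 1)
        rw [h] at this; push_cast at this; omega
      | succ j' =>
        have hy : y + ((j' + 1 : ℕ) : ℤ) = (y + 1) + (j' : ℤ) := by push_cast; ring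
        rw [hy] at h
        rw [List.replicate_succ, ih j' (y + 1) h]
    · have := endPos_fst_le rest ((0 : ℤ) - 1) y
      rw [h] at this; omega
    · have := endPos_fst_le rest ((0 : ℤ) - 1) (y + 1)
      rw [h] at this; omega

lemma areaOf_replicate_left (i : ℕ) : ∀ x y : ℤ, areaOf (x, y) (List.replicate i SStep.left) = 0 := by
  induction i with
  | zero => intro x y; simp [areaOf]
  | succ i ih => intro x y; rw [List.replicate_succ]; simp only [areaOf]; exact ih _ _

lemma areaOf_replicate_up (j : ℕ) : ∀ y : ℤ, areaOf (0, y) (List.replicate j SStep.up) = 0 := by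
  induction j with
  | zero => intro y; simp [areaOf]
  | succ j ih => intro y; rw [List.replicate_succ]; simp only [areaOf]; rw [ih]; ring

lemma pathFinset_right_zero (i : ℕ) : pathFinset i 0 = {List.replicate i SStep.left} := by
  ext p
  rw [mem_pathFinset, mem_singleton]
  constructor
  · intro h; exact eq_replicate_left p i 0 (by simpa using h)
  · rintro rfl; rw [endPos_replicate_left]; simp

lemma pathFinset_left_zero (j : ℕ) : pathFinset 0 j = {List.replicate j SStep.up} := by
  ext p
  rw [mem_pathFinset, mem_singleton]
  constructor
  · intro h
    exact eq_replicate_up p j 0 (by simpa using h)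
  · rintro rfl; rw [endPos_replicate_up]; simp

lemma Zpf_right_zero {R : Type*} [CommRing R] (γ q : R) (i : ℕ) : Zpf γ q i 0 = 1 := by
  unfold Zpf
  rw [pathFinset_right_zero, sum_singleton, areaOf_replicate_left]
  simp [diagCount, List.count_replicate]

lemma Zpf_left_zero {R : Type*} [CommRing R] (γ q : R) (j : ℕ) : Zpf γ q 0 j = 1 := by
  unfold Zpf
  rw [pathFinset_left_zero, sum_singleton]
  rw [show ((0 : ℕ) : ℤ) = 0 from rfl, areaOf_replicate_up]
  simp [diagCount, List.count_replicate]

lemma pathFinset_succ_succ (i j : ℕ) :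
    pathFinset (i + 1) (j + 1) =
      ((pathFinset (i + 1) j).image (SStep.up :: ·)) ∪
      ((pathFinset i (j + 1)).image (SStep.left :: ·)) ∪
      ((pathFinset i j).image (SStep.diag :: ·)) := by
  ext p
  simp only [mem_union, mem_image, mem_pathFinset]
  cases p with
  | nil =>
    constructor
    · intro h
      simp only [endPos, Prod.mk.injEq] at h
      exfalso; omega
    · rintro ((⟨l, _, h⟩ | ⟨l, _, h⟩) | ⟨l, _, h⟩) <;> simp at h
  | cons s rest =>
    cases s
    · -- up
      simp only [endPos, stepMove]
      rw [show ((0 : ℤ) + 1) = 0 + 1 from rfl, endPos_shift rest _ 0 1]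
      constructor
      · intro h
        rw [Prod.mk.injEq] at h
        refine Or.inl (Or.inl ⟨rest, ?_, rfl⟩)
        have h2 : (endPos (((i + 1 : ℕ) : ℤ), 0) rest).2 = (j : ℤ) := by
          have := h.2; push_cast at this ⊢; omega
        exact Prod.ext_iff.mpr ⟨h.1, h2⟩
      · rintro ((⟨l, hl, h⟩ | ⟨l, _, h⟩) | ⟨l, _, h⟩) <;> simp only [List.cons.injEq] at h
        · obtain ⟨_, rfl⟩ := h
          rw [hl]
          exact Prod.ext_iff.mpr ⟨rfl, by show (j:ℤ) + 1 = ((j+1:ℕ):ℤ); push_cast; ring⟩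
        · exact absurd h.1 (by simp)
        · exact absurd h.1 (by simp)
    · -- left
      simp only [endPos, stepMove]
      have hx : ((i + 1 : ℕ) : ℤ) - 1 = (i : ℤ) := by push_cast; ring
      rw [hx]
      constructor
      · intro h
        exact Or.inl (Or.inr ⟨rest, h, rfl⟩)
      · rintro ((⟨l, _, h⟩ | ⟨l, hl, h⟩) | ⟨l, _, h⟩) <;> simp only [List.cons.injEq] at h
        · exact absurd h.1 (by simp)
        · obtain ⟨_, rfl⟩ := h
          exact hl
        · exact absurd h.1 (by simp)
    · -- diag
      simp only [endPos, stepMove]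
      have hx : ((i + 1 : ℕ) : ℤ) - 1 = (i : ℤ) := by push_cast; ring
      rw [hx, show ((0 : ℤ) + 1) = 0 + 1 from rfl, endPos_shift rest _ 0 1]
      constructor
      · intro h
        rw [Prod.mk.injEq] at h
        refine Or.inr ⟨rest, ?_, rfl⟩
        have h2 : (endPos ((i : ℤ), 0) rest).2 = (j : ℤ) := by
          have := h.2; push_cast at this ⊢; omega
        exact Prod.ext_iff.mpr ⟨h.1, h2⟩
      · rintro ((⟨l, _, h⟩ | ⟨l, _, h⟩) | ⟨l, hl, h⟩) <;> simp only [List.cons.injEq] at h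
        · exact absurd h.1 (by simp)
        · exact absurd h.1 (by simp)
        · obtain ⟨_, rfl⟩ := h
          rw [hl]
          exact Prod.ext_iff.mpr ⟨rfl, by show (j:ℤ) + 1 = ((j+1:ℕ):ℤ); push_cast; ring⟩

lemma disjoint_cons_image (s t : Finset (List SStep)) (s1 s2 : SStep) (h : s1 ≠ s2) :
    Disjoint (s.image (s1 :: ·)) (t.image (s2 :: ·)) := by
  rw [Finset.disjoint_left]
  intro p hp hq
  obtain ⟨l, _, rfl⟩ := mem_image.mp hp
  obtain ⟨l', _, he⟩ := mem_image.mp hq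
  simp only [List.cons.injEq] at he
  exact h (he.1.symm)

lemma Zpf_succ_succ (γ q : ℝ) (i j : ℕ) :
    Zpf γ q (i + 1) (j + 1) = q ^ (2 * (i + 1)) * Zpf γ q (i + 1) j + Zpf γ q i (j + 1)
      + γ * q ^ (2 * i + 1) * Zpf γ q i j := by
  have hinj : ∀ (s : SStep) (u : Finset (List SStep)),
      ∀ x ∈ u, ∀ y ∈ u, (s :: x : List SStep) = s :: y → x = y := by
    intro s u x _ y _ h
    injection h
  unfold Zpf
  rw [pathFinset_succ_succ]
  rw [Finset.sum_union (by
        rw [Finset.disjoint_left]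
        intro p hp hq
        rw [mem_union] at hp
        obtain ⟨l, _, rfl⟩ := mem_image.mp hq
        rcases hp with hp | hp <;> obtain ⟨l', _, he⟩ := mem_image.mp hp <;>
          simp only [List.cons.injEq] at he <;> exact absurd he.1 (by simp)),
      Finset.sum_union (disjoint_cons_image _ _ _ _ (by simp)),
      Finset.sum_image (hinj _ _), Finset.sum_image (hinj _ _), Finset.sum_image (hinj _ _)]
  have hup : ∑ p ∈ pathFinset (i + 1) j,
      γ ^ diagCount (SStep.up :: p) * q ^ (areaOf (((i + 1 : ℕ) : ℤ), 0) (SStep.up :: p)).toNat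
      = q ^ (2 * (i + 1)) * ∑ p ∈ pathFinset (i + 1) j,
          γ ^ diagCount p * q ^ (areaOf (((i + 1 : ℕ) : ℤ), 0) p).toNat := by
    rw [Finset.mul_sum]
    refine sum_congr rfl fun p hp => ?_
    have hend := mem_pathFinset.mp hp
    have hnn : 0 ≤ areaOf (((i + 1 : ℕ) : ℤ), 0) p := by
      apply areaOf_nonneg
      rw [hend]
    have harea : areaOf (((i + 1 : ℕ) : ℤ), 0) (SStep.up :: p)
        = 2 * ((i + 1 : ℕ) : ℤ) + areaOf (((i + 1 : ℕ) : ℤ), 0) p := by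
      simp only [areaOf]
      rw [areaOf_y_irrel p _ (0 + 1) 0]
    have hdc : diagCount (SStep.up :: p) = diagCount p := by
      simp [diagCount]
    rw [harea, hdc]
    have ht : (2 * ((i + 1 : ℕ) : ℤ) + areaOf (((i + 1 : ℕ) : ℤ), 0) p).toNat
        = 2 * (i + 1) + (areaOf (((i + 1 : ℕ) : ℤ), 0) p).toNat := by omega
    rw [ht, pow_add]
    ring
  have hleft : ∑ p ∈ pathFinset i (j + 1),
      γ ^ diagCount (SStep.left :: p) * q ^ (areaOf (((i + 1 : ℕ) : ℤ), 0) (SStep.left :: p)).toNat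
      = ∑ p ∈ pathFinset i (j + 1),
          γ ^ diagCount p * q ^ (areaOf ((i : ℤ), 0) p).toNat := by
    refine sum_congr rfl fun p hp => ?_
    have harea : areaOf (((i + 1 : ℕ) : ℤ), 0) (SStep.left :: p) = areaOf ((i : ℤ), 0) p := by
      simp only [areaOf]
      congr 2
      push_cast; ring
    have hdc : diagCount (SStep.left :: p) = diagCount p := by
      simp [diagCount]
    rw [harea, hdc]
  have hdiag : ∑ p ∈ pathFinset i j,
      γ ^ diagCount (SStep.diag :: p) * q ^ (areaOf (((i + 1 : ℕ) : ℤ), 0) (SStep.diag :: p)).toNat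
      = γ * q ^ (2 * i + 1) * ∑ p ∈ pathFinset i j,
          γ ^ diagCount p * q ^ (areaOf ((i : ℤ), 0) p).toNat := by
    rw [Finset.mul_sum]
    refine sum_congr rfl fun p hp => ?_
    have hend := mem_pathFinset.mp hp
    have hnn : 0 ≤ areaOf ((i : ℤ), 0) p := by
      apply areaOf_nonneg
      rw [hend]
    have harea : areaOf (((i + 1 : ℕ) : ℤ), 0) (SStep.diag :: p)
        = (2 * ((i + 1 : ℕ) : ℤ) - 1) + areaOf ((i : ℤ), 0) p := by
      simp only [areaOf]
      rw [areaOf_y_irrel _ _ (0 + 1) 0]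
      congr 2
      push_cast; ring
    have hdc : diagCount (SStep.diag :: p) = diagCount p + 1 := by
      simp [diagCount]
    rw [harea, hdc]
    have ht : ((2 * ((i + 1 : ℕ) : ℤ) - 1) + areaOf ((i : ℤ), 0) p).toNat
        = (2 * i + 1) + (areaOf ((i : ℤ), 0) p).toNat := by omega
    rw [ht, pow_add, pow_add]
    ring
  rw [hup, hleft, hdiag]

noncomputable def rC (γ q : ℝ) (k : ℕ) : ℝ := q * (γ + q ^ (2 * k + 1)) / (q ^ (2 * k + 2) - 1)

noncomputable def cC (γ q : ℝ) : ℕ → ℕ → ℝ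
  | 0, 0 => 1
  | _ + 1, 0 => 0
  | 0, j + 1 => 1 - ∑ k ∈ Finset.range (j + 1), cC γ q k j * rC γ q k
  | k + 1, j + 1 => cC γ q k j * rC γ q k

lemma cC_zz (γ q : ℝ) : cC γ q 0 0 = 1 := by rw [cC]

lemma cC_succ_zero (γ q : ℝ) (k : ℕ) : cC γ q (k + 1) 0 = 0 := by rw [cC]

lemma cC_zero_succ (γ q : ℝ) (j : ℕ) :
    cC γ q 0 (j + 1) = 1 - ∑ k ∈ Finset.range (j + 1), cC γ q k j * rC γ q k := by rw [cC]

lemma cC_succ_succ (γ q : ℝ) (k j : ℕ) :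
    cC γ q (k + 1) (j + 1) = cC γ q k j * rC γ q k := by rw [cC]

lemma cC_gt (γ q : ℝ) : ∀ j k : ℕ, j < k → cC γ q k j = 0 := by
  intro j
  induction j with
  | zero =>
    intro k hk
    cases k with
    | zero => omega
    | succ k' => exact cC_succ_zero γ q k'
  | succ j ih =>
    intro k hk
    cases k with
    | zero => omega
    | succ k' =>
      rw [cC_succ_succ, ih k' (by omega), zero_mul]

lemma cC_sum_one (γ q : ℝ) : ∀ j : ℕ, ∑ k ∈ Finset.range (j + 1), cC γ q k j = 1 := by
  intro j
  induction j with
  | zero => simp [cC_zz]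
  | succ j ih =>
    rw [Finset.sum_range_succ' (fun k => cC γ q k (j + 1)) (j + 1)]
    simp only [cC_succ_succ, cC_zero_succ]
    ring

lemma q_pow_ne_one {q : ℝ} (hq0 : 0 < q) (hq1 : q ≠ 1) {m : ℕ} (hm : m ≠ 0) : q ^ m ≠ 1 := by
  rcases lt_or_gt_of_ne hq1 with h | h
  · exact ne_of_lt (pow_lt_one₀ hq0.le h hm)
  · exact ne_of_gt (one_lt_pow₀ h hm)

lemma Zpf_eq_sum (γ q : ℝ) (hq0 : 0 < q) (hq1 : q ≠ 1) :
    ∀ j i : ℕ, Zpf γ q i j = ∑ k ∈ Finset.range (j + 1), cC γ q k j * q ^ (2 * i * k) := by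
  intro j
  induction j with
  | zero =>
    intro i
    rw [Zpf_right_zero]
    simp [cC_zz]
  | succ j ihj =>
    intro i
    induction i with
    | zero =>
      rw [Zpf_left_zero]
      simp only [Nat.mul_zero, Nat.zero_mul, pow_zero, mul_one]
      exact (cC_sum_one γ q (j + 1)).symm
    | succ i ihi =>
      rw [Zpf_succ_succ, ihj (i + 1), ihi, ihj i]
      have key : ∀ k ∈ Finset.range (j + 1),
          cC γ q (k + 1) (j + 1) * q ^ (2 * (i + 1) * (k + 1))
            = cC γ q (k + 1) (j + 1) * q ^ (2 * i * (k + 1))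
              + (q ^ (2 * (i + 1)) * (cC γ q k j * q ^ (2 * (i + 1) * k))
                + γ * q ^ (2 * i + 1) * (cC γ q k j * q ^ (2 * i * k))) := by
        intro k hk
        rw [cC_succ_succ, rC]
        have hd : q ^ (2 * k + 2) - 1 ≠ 0 :=
          sub_ne_zero.mpr (q_pow_ne_one hq0 hq1 (by omega))
        field_simp
        ring
      rw [Finset.sum_range_succ' (fun k => cC γ q k (j + 1) * q ^ (2 * (i + 1) * k)) (j + 1),
          Finset.sum_range_succ' (fun k => cC γ q k (j + 1) * q ^ (2 * i * k)) (j + 1)]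
      simp only [Nat.mul_zero, pow_zero, mul_one]
      rw [Finset.sum_congr rfl key, Finset.sum_add_distrib, Finset.sum_add_distrib,
        ← Finset.mul_sum, ← Finset.mul_sum]
      ring

lemma q_pow_inj {q : ℝ} (hq0 : 0 < q) (hq1 : q ≠ 1) {s t : ℕ} (h : s ≠ t) : q ^ s ≠ q ^ t := by
  intro he
  rcases Nat.lt_or_ge s t with hlt | hge
  · have : q ^ t = q ^ s * q ^ (t - s) := by rw [← pow_add]; congr 1; omega
    rw [this] at he
    have h1 : q ^ (t - s) = 1 :=
      mul_left_cancel₀ (pow_ne_zero s hq0.ne') (by rw [mul_one]; exact he.symm)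
    exact q_pow_ne_one hq0 hq1 (by omega) h1
  · have hlt : t < s := by omega
    have : q ^ s = q ^ t * q ^ (s - t) := by rw [← pow_add]; congr 1; omega
    rw [this] at he
    have h1 : q ^ (s - t) = 1 :=
      mul_left_cancel₀ (pow_ne_zero t hq0.ne') (by rw [mul_one]; exact he)
    exact q_pow_ne_one hq0 hq1 (by omega) h1

lemma cC_diag (γ q : ℝ) : ∀ j : ℕ, cC γ q j j = ∏ k ∈ Finset.range j, rC γ q k := by
  intro j
  induction j with
  | zero => rw [cC_zz]; simp
  | succ j ih => rw [cC_succ_succ, ih, Finset.prod_range_succ]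

lemma sum_odd_sq (m : ℕ) : ∑ k ∈ Finset.range m, (2 * k + 1) = m ^ 2 := by
  induction m with
  | zero => simp
  | succ m ih => rw [Finset.sum_range_succ, ih]; ring

lemma sum_sq_eq (n : ℕ) : ∑ i ∈ Finset.range (n + 1), i ^ 2 = n * (n + 1) * (2 * n + 1) / 6 := by
  have h6 : ∀ m : ℕ, 6 * ∑ i ∈ Finset.range (m + 1), i ^ 2 = m * (m + 1) * (2 * m + 1) := by
    intro m
    induction m with
    | zero => simp
    | succ m ih => rw [Finset.sum_range_succ, Nat.mul_add, ih]; ring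
  refine (Nat.div_eq_of_eq_mul_left (by norm_num) ?_).symm
  rw [← h6 n]; ring

lemma step_core (γ q : ℝ) (hq0 : 0 < q) (hq1 : q ≠ 1) (n : ℕ) :
    cC γ q (n + 1) (n + 1) * ∏ j ∈ Finset.range (n + 1), (q ^ (2 * (n + 1)) - q ^ (2 * j))
      = q ^ ((n + 1) ^ 2) * ∏ s ∈ Finset.range (n + 1), (γ + q ^ (2 * s + 1)) := by
  rw [cC_diag]
  rw [← Finset.prod_range_reflect (fun j => (q ^ (2 * (n + 1)) - q ^ (2 * j))) (n + 1)]
  simp only [Nat.add_sub_cancel]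
  rw [← Finset.prod_mul_distrib]
  have key : ∀ k ∈ Finset.range (n + 1),
      rC γ q k * (q ^ (2 * (n + 1)) - q ^ (2 * (n - k)))
        = q ^ (2 * (n - k) + 1) * (γ + q ^ (2 * k + 1)) := by
    intro k hk
    rw [Finset.mem_range] at hk
    obtain ⟨d, rfl⟩ : ∃ d, n = k + d := ⟨n - k, by omega⟩
    rw [show k + d - k = d by omega]
    have hd : q ^ (2 * k + 2) - 1 ≠ 0 :=
      sub_ne_zero.mpr (q_pow_ne_one hq0 hq1 (by omega))
    rw [rC, div_mul_eq_mul_div, div_eq_iff hd]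
    ring
  rw [Finset.prod_congr rfl key, Finset.prod_mul_distrib,
    Finset.prod_pow_eq_pow_sum]
  congr 1
  congr 1
  rw [← sum_odd_sq (n + 1), ← Finset.sum_range_reflect (fun k => 2 * k + 1) (n + 1)]
  simp only [Nat.add_sub_cancel]

lemma G_step (x : ℕ → ℝ) (n : ℕ) :
    ∏ s ∈ Finset.range (n + 1), x s ^ (n + 1 - s)
      = (∏ s ∈ Finset.range n, x s ^ (n - s)) * ∏ s ∈ Finset.range (n + 1), x s := by
  have h1 : ∀ s ∈ Finset.range (n + 1), x s ^ (n + 1 - s) = x s ^ (n - s) * x s := by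
    intro s hs
    rw [Finset.mem_range] at hs
    rw [show n + 1 - s = (n - s) + 1 by omega, pow_succ]
  rw [Finset.prod_congr rfl h1, Finset.prod_mul_distrib]
  congr 1
  rw [Finset.prod_range_succ, Nat.sub_self, pow_zero, mul_one]

lemma K_identity (γ q : ℝ) (hq0 : 0 < q) (hq1 : q ≠ 1) : ∀ n : ℕ,
    (∏ j ∈ Finset.range (n + 1), cC γ q j j) *
        (∏ i ∈ Finset.range (n + 1), ∏ j ∈ Finset.range i, (q ^ (2 * i) - q ^ (2 * j)))
      = q ^ (∑ i ∈ Finset.range (n + 1), i ^ 2) *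
          ∏ s ∈ Finset.range n, (γ + q ^ (2 * s + 1)) ^ (n - s) := by
  intro n
  induction n with
  | zero => simp [cC_zz]
  | succ n ih =>
    rw [Finset.prod_range_succ (fun j => cC γ q j j),
      Finset.prod_range_succ (fun i => ∏ j ∈ Finset.range i, (q ^ (2 * i) - q ^ (2 * j))),
      Finset.sum_range_succ, pow_add, G_step]
    have : (∏ j ∈ Finset.range (n + 1), cC γ q j j) * cC γ q (n + 1) (n + 1) *
        ((∏ i ∈ Finset.range (n + 1), ∏ j ∈ Finset.range i, (q ^ (2 * i) - q ^ (2 * j))) *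
          ∏ j ∈ Finset.range (n + 1), (q ^ (2 * (n + 1)) - q ^ (2 * j)))
        = ((∏ j ∈ Finset.range (n + 1), cC γ q j j) *
            (∏ i ∈ Finset.range (n + 1), ∏ j ∈ Finset.range i, (q ^ (2 * i) - q ^ (2 * j)))) *
          (cC γ q (n + 1) (n + 1) * ∏ j ∈ Finset.range (n + 1), (q ^ (2 * (n + 1)) - q ^ (2 * j))) := by
      ring
    rw [this, ih, step_core γ q hq0 hq1 n]
    ring

lemma filter_range_lt (m c : ℕ) (hc : c ≤ m) :
    (Finset.range m).filter (fun v => v < c) = Finset.range c := by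
  ext v
  simp only [Finset.mem_filter, Finset.mem_range]
  omega

lemma prod_fin_lt (m : ℕ) (f : ℕ → ℕ → ℝ) :
    (∏ i : Fin m, ∏ j ∈ Finset.univ.filter (fun j => j < i), f (i : ℕ) (j : ℕ))
      = ∏ i ∈ Finset.range m, ∏ j ∈ Finset.range i, f i j := by
  rw [← Fin.prod_univ_eq_prod_range (fun i => ∏ j ∈ Finset.range i, f i j) m]
  refine Finset.prod_congr rfl fun i _ => ?_
  rw [Finset.prod_filter]
  have h1 : ∀ j : Fin m,
      (if j < i then f (i : ℕ) (j : ℕ) else 1)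
        = (fun v : ℕ => if v < (i : ℕ) then f (i : ℕ) v else 1) (j : ℕ) := by
    intro j
    simp only [Fin.lt_def]
  rw [Finset.prod_congr rfl (fun j _ => h1 j),
    Fin.prod_univ_eq_prod_range (fun v => if v < (i : ℕ) then f (i : ℕ) v else 1) m,
    ← Finset.prod_filter, filter_range_lt m i i.2.le]

lemma prod_Ioi_flip {m : ℕ} (F : Fin m → Fin m → ℝ) :
    (∏ i : Fin m, ∏ j ∈ Finset.Ioi i, F j i)
      = ∏ i : Fin m, ∏ j ∈ Finset.univ.filter (fun j => j < i), F i j := by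
  refine Finset.prod_comm' ?_
  intro x y
  simp [Finset.mem_Ioi, Finset.mem_filter]

/-- The partition function of the domino tiling of the Aztec rectangle with defects:
for integers `0 = a_0 < a_1 < ⋯ < a_n`, the determinant of the matrix
`A_{i,j} = Z_{(a_i,0)→(0,j)}` equals
`q^{n(n+1)(2n+1)/6} ∏_{s=0}^{n-1}(γ+q^{2s+1})^{n-s} · Δ(q^{2a_0},…,q^{2a_n})/Δ(q^0,…,q^{2n})`. -/
theorem aztec_rectangle_partition_function (γ q : ℝ) (hq0 : 0 < q) (hq1 : q ≠ 1)
    (n : ℕ) (a : Fin (n + 1) → ℕ) (ha0 : a 0 = 0) (hmono : StrictMono a) :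
    Matrix.det (Matrix.of fun i j : Fin (n + 1) => Zpf γ q (a i) (j : ℕ)) =
      q ^ (n * (n + 1) * (2 * n + 1) / 6) *
        (∏ s ∈ Finset.range n, (γ + q ^ (2 * s + 1)) ^ (n - s)) *
        ((∏ i : Fin (n + 1), ∏ j ∈ Finset.univ.filter fun j => j < i,
            (q ^ (2 * a i) - q ^ (2 * a j))) /
          (∏ i : Fin (n + 1), ∏ j ∈ Finset.univ.filter fun j => j < i,
            (q ^ (2 * (i : ℕ)) - q ^ (2 * (j : ℕ))))) := by
  classical
  have hA : (Matrix.of fun i j : Fin (n + 1) => Zpf γ q (a i) (j : ℕ))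
      = Matrix.vandermonde (fun i => q ^ (2 * a i)) *
          Matrix.of (fun k j : Fin (n + 1) => cC γ q (k : ℕ) (j : ℕ)) := by
    ext i j
    rw [Matrix.mul_apply]
    simp only [Matrix.of_apply, Matrix.vandermonde_apply]
    rw [Zpf_eq_sum γ q hq0 hq1 j (a i)]
    rw [Finset.sum_subset (Finset.range_subset_range.mpr (by omega : (j : ℕ) + 1 ≤ n + 1))
      (fun k _ hk => by
        rw [cC_gt γ q j k (by simpa [Finset.mem_range] using hk), zero_mul])]
    rw [← Fin.sum_univ_eq_sum_range (fun k => cC γ q k (j : ℕ) * q ^ (2 * (a i) * k)) (n + 1)]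
    refine Finset.sum_congr rfl fun k _ => ?_
    rw [← pow_mul]
    ring
  rw [hA, Matrix.det_mul, Matrix.det_vandermonde]
  have hC : (Matrix.of (fun k j : Fin (n + 1) => cC γ q (k : ℕ) (j : ℕ))).det
      = ∏ j ∈ Finset.range (n + 1), cC γ q j j := by
    rw [Matrix.det_of_upperTriangular (by
      intro i j hij
      simp only [Matrix.of_apply]
      exact cC_gt γ q j i hij)]
    rw [← Fin.prod_univ_eq_prod_range (fun j => cC γ q j j) (n + 1)]
    rfl
  rw [hC]
  have hN : (∏ i : Fin (n + 1), ∏ j ∈ Finset.Ioi i,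
        ((fun i => q ^ (2 * a i)) j - (fun i => q ^ (2 * a i)) i))
      = ∏ i : Fin (n + 1), ∏ j ∈ Finset.univ.filter (fun j => j < i),
          (q ^ (2 * a i) - q ^ (2 * a j)) :=
    prod_Ioi_flip (fun i j => q ^ (2 * a i) - q ^ (2 * a j))
  rw [hN]
  have hDd : (∏ i : Fin (n + 1), ∏ j ∈ Finset.univ.filter (fun j => j < i),
        (q ^ (2 * (i : ℕ)) - q ^ (2 * (j : ℕ))))
      = ∏ i ∈ Finset.range (n + 1), ∏ j ∈ Finset.range i, (q ^ (2 * i) - q ^ (2 * j)) :=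
    prod_fin_lt (n + 1) (fun i j => q ^ (2 * i) - q ^ (2 * j))
  rw [hDd]
  have hDne : (∏ i ∈ Finset.range (n + 1), ∏ j ∈ Finset.range i,
      (q ^ (2 * i) - q ^ (2 * j))) ≠ 0 := by
    rw [Finset.prod_ne_zero_iff]
    intro i hi
    rw [Finset.prod_ne_zero_iff]
    intro j hj
    rw [Finset.mem_range] at hj
    exact sub_ne_zero.mpr (q_pow_inj hq0 hq1 (by omega))
  have hK := K_identity γ q hq0 hq1 n
  rw [sum_sq_eq] at hK
  have hP : (∏ j ∈ Finset.range (n + 1), cC γ q j j)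
      = q ^ (n * (n + 1) * (2 * n + 1) / 6) *
          (∏ s ∈ Finset.range n, (γ + q ^ (2 * s + 1)) ^ (n - s)) /
          (∏ i ∈ Finset.range (n + 1), ∏ j ∈ Finset.range i, (q ^ (2 * i) - q ^ (2 * j))) := by
    rw [eq_div_iff hDne, hK]
  rw [hP]
  field_simp
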